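/- For the metric g_{(r₁,r₂)} on Sp(2) and the orthonormal frame element e₄ (off-diagonal block with y = 1), the sectional curvature K(e₄, e_p) equals r₁/2 for p = 1,2,3; equals 4 - (3/2)(r₁+r₂) for p = 5,6,7; and equals r₂/2 for p = 8,9,10. Consequently Ric(e₄) = 12 - 3(r₁+r₂). -/

import Mathlib

open Quaternion

/-- The quaternion unit i. -/
def qI : ℍ[ℝ] := ⟨0, 1, 0, 0⟩
/-- The quaternion unit j. -/
def qJ : ℍ[ℝ] := ⟨0, 0, 1, 0⟩
/-- The quaternion unit k. -/
def qK : ℍ[ℝ] := ⟨0, 0, 0, 1⟩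

/-- The sectional curvature expression K(ξ₁,ξ₂) of the left-invariant metric
g_{(r₁,r₂)} on Sp(2), in terms of the components of ξᵢ = ((xᵢ,yᵢ),(-conj yᵢ,zᵢ)). -/
noncomputable def sp2K (r₁ r₂ : ℝ) (x₁ y₁ z₁ x₂ y₂ z₂ : ℍ[ℝ]) : ℝ :=
  let α₁ : ℍ[ℝ] := y₂ * star y₁ - y₁ * star y₂
  let α₂ : ℍ[ℝ] := star y₂ * y₁ - star y₁ * y₂
  let β₁ : ℍ[ℝ] := x₁ * x₂ - x₂ * x₁
  let β₂ : ℍ[ℝ] := z₁ * z₂ - z₂ * z₁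
  let γ₁ : ℍ[ℝ] := x₁ * y₂ - x₂ * y₁
  let γ₂ : ℍ[ℝ] := y₁ * z₂ - y₂ * z₁
  (1 / 4) * ‖r₁ • γ₁ + r₂ • γ₂‖ ^ 2 + (r₁ / 8) * ‖β₁ + (3 - 2 * r₁) • α₁‖ ^ 2
    + (r₂ / 8) * ‖β₂ + (3 - 2 * r₂) • α₂‖ ^ 2
    + (1 / 2) * ((1 - r₁) ^ 3 + (1 - r₂) ^ 3) * ‖α₁‖ ^ 2


lemma hx (r₁ r₂ : ℝ) (h₁ : 0 < r₁) (q : ℍ[ℝ]) (hq : ‖q‖ = 1) :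
    sp2K r₁ r₂ 0 1 0 (Real.sqrt (2 / r₁) • q) 0 0 = r₁ / 2 := by
  simp [sp2K, norm_smul, hq, abs_of_pos h₁, mul_pow, Real.sq_sqrt (le_of_lt (by positivity : (0:ℝ) < 2 / r₁)),
    Real.sqrt_nonneg, abs_of_nonneg (Real.sqrt_nonneg _)]
  field_simp
  rw [Real.sq_sqrt (by norm_num : (0:ℝ) ≤ 2), Real.sq_sqrt h₁.le]
  ring

lemma hz (r₁ r₂ : ℝ) (h₂ : 0 < r₂) (q : ℍ[ℝ]) (hq : ‖q‖ = 1) :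
    sp2K r₁ r₂ 0 1 0 0 0 (Real.sqrt (2 / r₂) • q) = r₂ / 2 := by
  simp [sp2K, norm_smul, hq, abs_of_pos h₂, mul_pow, Real.sq_sqrt (le_of_lt (by positivity : (0:ℝ) < 2 / r₂)),
    abs_of_nonneg (Real.sqrt_nonneg _)]
  field_simp
  rw [Real.sq_sqrt (by norm_num : (0:ℝ) ≤ 2), Real.sq_sqrt h₂.le]
  ring

lemma hy (r₁ r₂ : ℝ) (q : ℍ[ℝ]) (hq : ‖q‖ = 1) (hs : star q = -q) :
    sp2K r₁ r₂ 0 1 0 0 q 0 = 4 - (3 / 2) * (r₁ + r₂) := by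
  have h2 : ‖q + q‖ ^ 2 = 4 := by
    have : q + q = (2:ℝ) • q := by module
    rw [this, norm_smul, hq]; norm_num
  have hA : ∀ c : ℝ, ‖c • (q + q)‖ ^ 2 = c ^ 2 * 4 := fun c => by
    rw [norm_smul, mul_pow, h2, Real.norm_eq_abs, sq_abs]
  simp only [sp2K, star_one, mul_one, one_mul, mul_zero, zero_mul, sub_zero, zero_sub,
    smul_zero, zero_smul, add_zero, zero_add, hs, sub_neg_eq_add]
  rw [show (3 - 2*r₂) • (-q - q) = (-(3 - 2*r₂)) • (q + q) by module, hA, hA, h2, norm_zero]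
  ring


lemma normI : ‖qI‖ = 1 := by
  have := Quaternion.normSq_eq_norm_mul_self qI
  have h : Quaternion.normSq qI = 1 := by rw [Quaternion.normSq_def']; simp [qI]
  nlinarith [norm_nonneg qI]

lemma normJ : ‖qJ‖ = 1 := by
  have := Quaternion.normSq_eq_norm_mul_self qJ
  have h : Quaternion.normSq qJ = 1 := by rw [Quaternion.normSq_def']; simp [qJ]
  nlinarith [norm_nonneg qJ]

lemma normK : ‖qK‖ = 1 := by
  have := Quaternion.normSq_eq_norm_mul_self qK
  have h : Quaternion.normSq qK = 1 := by rw [Quaternion.normSq_def']; simp [qK]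
  nlinarith [norm_nonneg qK]

lemma starI : star qI = -qI := by ext <;> simp <;> simp [qI]
lemma starJ : star qJ = -qJ := by ext <;> simp <;> simp [qJ]
lemma starK : star qK = -qK := by ext <;> simp <;> simp [qK]

/-- Sectional curvatures K(e₄,e_p) for the orthonormal frame of (Sp(2), g_{(r₁,r₂)}),
and the resulting Ricci curvature Ric(e₄) = 12 - 3(r₁+r₂). -/
theorem sp2_ric_e4 (r₁ r₂ : ℝ) (h₁ : 0 < r₁) (h₂ : 0 < r₂) :
    (sp2K r₁ r₂ 0 1 0 (Real.sqrt (2 / r₁) • qI) 0 0 = r₁ / 2) ∧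
    (sp2K r₁ r₂ 0 1 0 (Real.sqrt (2 / r₁) • qJ) 0 0 = r₁ / 2) ∧
    (sp2K r₁ r₂ 0 1 0 (Real.sqrt (2 / r₁) • qK) 0 0 = r₁ / 2) ∧
    (sp2K r₁ r₂ 0 1 0 0 qI 0 = 4 - (3 / 2) * (r₁ + r₂)) ∧
    (sp2K r₁ r₂ 0 1 0 0 qJ 0 = 4 - (3 / 2) * (r₁ + r₂)) ∧
    (sp2K r₁ r₂ 0 1 0 0 qK 0 = 4 - (3 / 2) * (r₁ + r₂)) ∧
    (sp2K r₁ r₂ 0 1 0 0 0 (Real.sqrt (2 / r₂) • qI) = r₂ / 2) ∧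
    (sp2K r₁ r₂ 0 1 0 0 0 (Real.sqrt (2 / r₂) • qJ) = r₂ / 2) ∧
    (sp2K r₁ r₂ 0 1 0 0 0 (Real.sqrt (2 / r₂) • qK) = r₂ / 2) ∧
    (sp2K r₁ r₂ 0 1 0 (Real.sqrt (2 / r₁) • qI) 0 0
      + sp2K r₁ r₂ 0 1 0 (Real.sqrt (2 / r₁) • qJ) 0 0
      + sp2K r₁ r₂ 0 1 0 (Real.sqrt (2 / r₁) • qK) 0 0
      + sp2K r₁ r₂ 0 1 0 0 qI 0
      + sp2K r₁ r₂ 0 1 0 0 qJ 0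
      + sp2K r₁ r₂ 0 1 0 0 qK 0
      + sp2K r₁ r₂ 0 1 0 0 0 (Real.sqrt (2 / r₂) • qI)
      + sp2K r₁ r₂ 0 1 0 0 0 (Real.sqrt (2 / r₂) • qJ)
      + sp2K r₁ r₂ 0 1 0 0 0 (Real.sqrt (2 / r₂) • qK)
      = 12 - 3 * (r₁ + r₂)) := by
  refine ⟨hx r₁ r₂ h₁ qI normI, hx r₁ r₂ h₁ qJ normJ, hx r₁ r₂ h₁ qK normK,
    hy r₁ r₂ qI normI starI, hy r₁ r₂ qJ normJ starJ, hy r₁ r₂ qK normK starK,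
    hz r₁ r₂ h₂ qI normI, hz r₁ r₂ h₂ qJ normJ, hz r₁ r₂ h₂ qK normK, ?_⟩
  rw [hx r₁ r₂ h₁ qI normI, hx r₁ r₂ h₁ qJ normJ, hx r₁ r₂ h₁ qK normK,
    hy r₁ r₂ qI normI starI, hy r₁ r₂ qJ normJ starJ, hy r₁ r₂ qK normK starK,
    hz r₁ r₂ h₂ qI normI, hz r₁ r₂ h₂ qJ normJ, hz r₁ r₂ h₂ qK normK]
  ring
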